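/- Define on P₀ = S^m × (0,π)^K the function d(p₁,p₂) = min{d₁(p₁,p₂), d₂(p₁,p₂)} where d₁(p₁,p₂) = √(arccos(c₁·c₂)² + ‖r¹ − r²‖²) and d₂(p₁,p₂) = √(arccos(−c₁·c₂)² + ‖(π·1 − r¹) − r²‖²), for pᵢ = (cᵢ, rⁱ). Then d satisfies the triangle inequality: d(p₁,p₂) ≤ d(p₁,p₃) + d(p₃,p₂) for all p₁, p₂, p₃ ∈ P₀. -/

import Mathlib

open RealInnerProductSpace

noncomputable def subsphereDistOne {m K : ℕ}
    (p q : EuclideanSpace ℝ (Fin (m + 1)) × (Fin K → ℝ)) : ℝ :=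
  Real.sqrt (Real.arccos ⟪p.1, q.1⟫ ^ 2 + ∑ j, (p.2 j - q.2 j) ^ 2)

noncomputable def subsphereDistTwo {m K : ℕ}
    (p q : EuclideanSpace ℝ (Fin (m + 1)) × (Fin K → ℝ)) : ℝ :=
  Real.sqrt (Real.arccos (-⟪p.1, q.1⟫) ^ 2 + ∑ j, ((Real.pi - p.2 j) - q.2 j) ^ 2)

noncomputable def subsphereDist {m K : ℕ}
    (p q : EuclideanSpace ℝ (Fin (m + 1)) × (Fin K → ℝ)) : ℝ :=
  min (subsphereDistOne p q) (subsphereDistTwo p q)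

-- arccos is globally antitone
lemma my_arccos_anti : Antitone Real.arccos := fun x y h => by
  unfold Real.arccos
  have := Real.monotone_arcsin h
  linarith

-- spherical triangle inequality
lemma my_angle_triangle {V : Type*} [NormedAddCommGroup V] [InnerProductSpace ℝ V]
    (a b c : V) (ha : ‖a‖ = 1) (hb : ‖b‖ = 1) (hc : ‖c‖ = 1) :
    Real.arccos ⟪a, b⟫ ≤ Real.arccos ⟪a, c⟫ + Real.arccos ⟪c, b⟫ := by
  set u := ⟪a, c⟫ with hu'
  set v := ⟪c, b⟫ with hv'
  set w := ⟪a, b⟫ with hw'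
  have hu : |u| ≤ 1 := by simpa [ha, hc] using abs_real_inner_le_norm a c
  have hv : |v| ≤ 1 := by simpa [hb, hc] using abs_real_inner_le_norm c b
  rcases le_or_gt Real.pi (Real.arccos u + Real.arccos v) with hπ | hπ
  · exact le_trans (Real.arccos_le_pi w) hπ
  have hcc : ‖c‖ ^ 2 = 1 := by rw [hc]; norm_num
  have h1 : ⟪a - u • c, b - v • c⟫ = w - u * v := by
    simp only [inner_sub_left, inner_sub_right, real_inner_smul_left, real_inner_smul_right,
      real_inner_self_eq_norm_sq, hcc]
    rw [← hu', ← hv', ← hw']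
    ring
  have h2 : ‖a - u • c‖ = Real.sqrt (1 - u ^ 2) := by
    rw [← Real.sqrt_sq (norm_nonneg _), norm_sub_sq_real, real_inner_smul_right, ← hu',
      norm_smul, hc, ha, Real.norm_eq_abs]
    congr 1
    rw [mul_one, sq_abs]
    ring
  have h3 : ‖b - v • c‖ = Real.sqrt (1 - v ^ 2) := by
    rw [← Real.sqrt_sq (norm_nonneg _), norm_sub_sq_real, real_inner_smul_right,
      show (⟪b, c⟫ : ℝ) = v from (real_inner_comm c b).trans hv'.symm, norm_smul, hc, hb, Real.norm_eq_abs]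
    congr 1
    rw [mul_one, sq_abs]
    ring
  have hcs : -(‖a - u • c‖ * ‖b - v • c‖) ≤ ⟪a - u • c, b - v • c⟫ := by
    have := abs_real_inner_le_norm (a - u • c) (b - v • c)
    have := neg_abs_le ⟪a - u • c, b - v • c⟫
    linarith
  have key : Real.cos (Real.arccos u + Real.arccos v) ≤ w := by
    rw [Real.cos_add, Real.cos_arccos (abs_le.1 hu).1 (abs_le.1 hu).2,
      Real.cos_arccos (abs_le.1 hv).1 (abs_le.1 hv).2, Real.sin_arccos, Real.sin_arccos]
    rw [h1, h2, h3] at hcs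
    linarith
  have := my_arccos_anti key
  rwa [Real.arccos_cos (add_nonneg (Real.arccos_nonneg _) (Real.arccos_nonneg _)) hπ.le] at this

lemma my_minkowski {a b a' b' : ℝ} (ha : 0 ≤ a) (hb : 0 ≤ b) (ha' : 0 ≤ a') (hb' : 0 ≤ b') :
    Real.sqrt ((a + a') ^ 2 + (b + b') ^ 2) ≤
      Real.sqrt (a ^ 2 + b ^ 2) + Real.sqrt (a' ^ 2 + b' ^ 2) := by
  have h1 : Real.sqrt (a ^ 2 + b ^ 2) ^ 2 = a ^ 2 + b ^ 2 := Real.sq_sqrt (by positivity)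
  have h2 : Real.sqrt (a' ^ 2 + b' ^ 2) ^ 2 = a' ^ 2 + b' ^ 2 := Real.sq_sqrt (by positivity)
  have hcs : a * a' + b * b' ≤ Real.sqrt (a ^ 2 + b ^ 2) * Real.sqrt (a' ^ 2 + b' ^ 2) := by
    rw [← Real.sqrt_mul (by positivity)]
    rw [show (a ^ 2 + b ^ 2) * (a' ^ 2 + b' ^ 2) =
        (a * a' + b * b') ^ 2 + (a * b' - a' * b) ^ 2 by ring]
    calc a * a' + b * b' = Real.sqrt ((a * a' + b * b') ^ 2) := (Real.sqrt_sq (by positivity)).symm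
      _ ≤ _ := Real.sqrt_le_sqrt (by nlinarith)
  have hS : 0 ≤ Real.sqrt (a ^ 2 + b ^ 2) + Real.sqrt (a' ^ 2 + b' ^ 2) := by positivity
  calc Real.sqrt ((a + a') ^ 2 + (b + b') ^ 2)
      ≤ Real.sqrt ((Real.sqrt (a ^ 2 + b ^ 2) + Real.sqrt (a' ^ 2 + b' ^ 2)) ^ 2) := by
        apply Real.sqrt_le_sqrt
        nlinarith
    _ = _ := Real.sqrt_sq hS


lemma my_euclid_tri {K : ℕ} (x y z : Fin K → ℝ) :
    Real.sqrt (∑ j, (x j - y j) ^ 2) ≤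
      Real.sqrt (∑ j, (x j - z j) ^ 2) + Real.sqrt (∑ j, (z j - y j) ^ 2) := by
  have h := dist_triangle ((WithLp.equiv 2 (Fin K → ℝ)).symm x)
    ((WithLp.equiv 2 (Fin K → ℝ)).symm z) ((WithLp.equiv 2 (Fin K → ℝ)).symm y)
  simpa [EuclideanSpace.dist_eq, Real.dist_eq, sq_abs, WithLp.equiv_symm_apply, PiLp.toLp_apply] using h

lemma my_core {m K : ℕ} (a b c : EuclideanSpace ℝ (Fin (m + 1)))
    (ha : ‖a‖ = 1) (hb : ‖b‖ = 1) (hc : ‖c‖ = 1) (x y z : Fin K → ℝ) :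
    Real.sqrt (Real.arccos ⟪a, b⟫ ^ 2 + ∑ j, (x j - y j) ^ 2) ≤
      Real.sqrt (Real.arccos ⟪a, c⟫ ^ 2 + ∑ j, (x j - z j) ^ 2) +
      Real.sqrt (Real.arccos ⟪c, b⟫ ^ 2 + ∑ j, (z j - y j) ^ 2) := by
  have hA := my_angle_triangle a b c ha hb hc
  have hE := my_euclid_tri x y z
  have step1 : Real.sqrt (Real.arccos ⟪a, b⟫ ^ 2 + ∑ j, (x j - y j) ^ 2) ≤
      Real.sqrt ((Real.arccos ⟪a, c⟫ + Real.arccos ⟪c, b⟫) ^ 2 +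
        (Real.sqrt (∑ j, (x j - z j) ^ 2) + Real.sqrt (∑ j, (z j - y j) ^ 2)) ^ 2) := by
    apply Real.sqrt_le_sqrt
    have h1 : Real.arccos ⟪a, b⟫ ^ 2 ≤ (Real.arccos ⟪a, c⟫ + Real.arccos ⟪c, b⟫) ^ 2 :=
      pow_le_pow_left₀ (Real.arccos_nonneg _) hA 2
    have h2 : ∑ j, (x j - y j) ^ 2 ≤
        (Real.sqrt (∑ j, (x j - z j) ^ 2) + Real.sqrt (∑ j, (z j - y j) ^ 2)) ^ 2 := by
      have := Real.sqrt_le_sqrt (le_refl (∑ j, (x j - y j) ^ 2))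
      have h3 : Real.sqrt (∑ j, (x j - y j) ^ 2) ^ 2 = ∑ j, (x j - y j) ^ 2 :=
        Real.sq_sqrt (by positivity)
      calc ∑ j, (x j - y j) ^ 2 = Real.sqrt (∑ j, (x j - y j) ^ 2) ^ 2 := h3.symm
        _ ≤ _ := pow_le_pow_left₀ (Real.sqrt_nonneg _) hE 2
    linarith
  refine step1.trans ?_
  have := my_minkowski (Real.arccos_nonneg ⟪a, c⟫) (Real.sqrt_nonneg (∑ j, (x j - z j) ^ 2))
    (Real.arccos_nonneg ⟪c, b⟫) (Real.sqrt_nonneg (∑ j, (z j - y j) ^ 2))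
  calc _ ≤ _ := this
    _ = _ := by
      rw [Real.sq_sqrt (by positivity : (0:ℝ) ≤ ∑ j, (x j - z j) ^ 2),
        Real.sq_sqrt (by positivity : (0:ℝ) ≤ ∑ j, (z j - y j) ^ 2)]

/-- The distance `d = min{d₁, d₂}` on `P₀ = S^m × (0,π)^K` satisfies the
triangle inequality. -/
theorem subsphereDist_triangle {m K : ℕ} (hK : 1 ≤ K)
    (p₁ p₂ p₃ : EuclideanSpace ℝ (Fin (m + 1)) × (Fin K → ℝ))
    (h₁ : ‖p₁.1‖ = 1 ∧ ∀ j, p₁.2 j ∈ Set.Ioo 0 Real.pi)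
    (h₂ : ‖p₂.1‖ = 1 ∧ ∀ j, p₂.2 j ∈ Set.Ioo 0 Real.pi)
    (h₃ : ‖p₃.1‖ = 1 ∧ ∀ j, p₃.2 j ∈ Set.Ioo 0 Real.pi) :
    subsphereDist p₁ p₂ ≤ subsphereDist p₁ p₃ + subsphereDist p₃ p₂ := by
  obtain ⟨ha, -⟩ := h₁
  obtain ⟨hb, -⟩ := h₂
  obtain ⟨hc, -⟩ := h₃
  have han : ‖-p₁.1‖ = 1 := by simpa using ha
  have hbn : ‖-p₂.1‖ = 1 := by simpa using hb
  have e1 : ∀ (f g : Fin K → ℝ),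
      ∑ j, ((Real.pi - f j) - g j) ^ 2 = ∑ j, (f j - (Real.pi - g j)) ^ 2 := by
    intro f g
    exact Finset.sum_congr rfl fun j _ => by ring
  have e2 : ∀ (f g : Fin K → ℝ),
      ∑ j, (f j - g j) ^ 2 = ∑ j, ((Real.pi - f j) - (Real.pi - g j)) ^ 2 := by
    intro f g
    exact Finset.sum_congr rfl fun j _ => by ring
  have case11 : subsphereDistOne p₁ p₂ ≤ subsphereDistOne p₁ p₃ + subsphereDistOne p₃ p₂ := by
    simp only [subsphereDistOne]
    exact my_core p₁.1 p₂.1 p₃.1 ha hb hc p₁.2 p₂.2 p₃.2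
  have case12 : subsphereDistTwo p₁ p₂ ≤ subsphereDistOne p₁ p₃ + subsphereDistTwo p₃ p₂ := by
    have h := my_core p₁.1 (-p₂.1) p₃.1 ha hbn hc p₁.2 (fun j => Real.pi - p₂.2 j) p₃.2
    simp only [inner_neg_right] at h
    simp only [subsphereDistOne, subsphereDistTwo]
    rw [e1 p₁.2 p₂.2, e1 p₃.2 p₂.2]
    exact h
  have case21 : subsphereDistTwo p₁ p₂ ≤ subsphereDistTwo p₁ p₃ + subsphereDistOne p₃ p₂ := by
    have h := my_core (-p₁.1) p₂.1 p₃.1 han hb hc (fun j => Real.pi - p₁.2 j) p₂.2 p₃.2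
    simp only [inner_neg_left] at h
    simp only [subsphereDistOne, subsphereDistTwo]
    exact h
  have case22 : subsphereDistOne p₁ p₂ ≤ subsphereDistTwo p₁ p₃ + subsphereDistTwo p₃ p₂ := by
    have h := my_core (-p₁.1) (-p₂.1) p₃.1 han hbn hc
      (fun j => Real.pi - p₁.2 j) (fun j => Real.pi - p₂.2 j) p₃.2
    simp only [inner_neg_left, inner_neg_right, neg_neg] at h
    simp only [subsphereDistOne, subsphereDistTwo]
    rw [e2 p₁.2 p₂.2, e1 p₃.2 p₂.2]
    exact h
  unfold subsphereDist
  rcases le_total (subsphereDistOne p₁ p₃) (subsphereDistTwo p₁ p₃) with h13 | h13 <;>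
    rcases le_total (subsphereDistOne p₃ p₂) (subsphereDistTwo p₃ p₂) with h32 | h32
  · rw [min_eq_left h13, min_eq_left h32]
    exact le_trans (min_le_left _ _) case11
  · rw [min_eq_left h13, min_eq_right h32]
    exact le_trans (min_le_right _ _) case12
  · rw [min_eq_right h13, min_eq_left h32]
    exact le_trans (min_le_right _ _) case21
  · rw [min_eq_right h13, min_eq_right h32]
    exact le_trans (min_le_left _ _) case22
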